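/- Set ℏ = m = ω = 1 and let ℓ_k := {(x,p) ∈ ℝ² | x cos t_k + p sin t_k = x_k} for k = 1,2,3, where t_j − t_k ∉ πℤ for j ≠ k. Let A_{kl} be the intersection point of ℓ_k and ℓ_l. Then twice the signed area of the triangle A₁₂A₂₃A₃₁ with respect to the symplectic form dx ∧ dp is given by 2·S(A₁₂,A₂₃,A₃₁) = −(x₁ sin(t₂−t₃) + x₂ sin(t₃−t₁) + x₃ sin(t₁−t₂))² / (sin(t₂−t₃) sin(t₃−t₁) sin(t₁−t₂)). -/

import Mathlib

open Real

/-- The standard symplectic form on the phase plane: `σ((x,p),(x',p')) = xp' − px'`. -/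
noncomputable def symp2 (a b : ℝ × ℝ) : ℝ := a.1 * b.2 - a.2 * b.1

/-- The signed area of the triangle `ABC` with respect to `dx ∧ dp`:
`(1/2)[σ(A,B) + σ(B,C) + σ(C,A)]`. -/
noncomputable def triArea (A B C : ℝ × ℝ) : ℝ :=
  (1 / 2) * (symp2 A B + symp2 B C + symp2 C A)

set_option maxHeartbeats 4000000 in
/-- With `ℏ = m = ω = 1` and lines `ℓ_k = {(x,p) | x cos t_k + p sin t_k = x_k}` with
pairwise intersection points `A_{kl}`, twice the signed area of the triangle
`A₁₂A₂₃A₃₁` is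
`−(x₁ sin(t₂−t₃) + x₂ sin(t₃−t₁) + x₃ sin(t₁−t₂))² / (sin(t₂−t₃) sin(t₃−t₁) sin(t₁−t₂))`. -/
theorem double_signed_area_of_line_triangle
    (t₁ t₂ t₃ x₁ x₂ x₃ : ℝ)
    (h12 : ¬ ∃ n : ℤ, t₁ - t₂ = n * π)
    (h23 : ¬ ∃ n : ℤ, t₂ - t₃ = n * π)
    (h31 : ¬ ∃ n : ℤ, t₃ - t₁ = n * π)
    (A₁₂ A₂₃ A₃₁ : ℝ × ℝ)
    (hA₁₂ : A₁₂.1 * Real.cos t₁ + A₁₂.2 * Real.sin t₁ = x₁ ∧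
            A₁₂.1 * Real.cos t₂ + A₁₂.2 * Real.sin t₂ = x₂)
    (hA₂₃ : A₂₃.1 * Real.cos t₂ + A₂₃.2 * Real.sin t₂ = x₂ ∧
            A₂₃.1 * Real.cos t₃ + A₂₃.2 * Real.sin t₃ = x₃)
    (hA₃₁ : A₃₁.1 * Real.cos t₃ + A₃₁.2 * Real.sin t₃ = x₃ ∧
            A₃₁.1 * Real.cos t₁ + A₃₁.2 * Real.sin t₁ = x₁) :
    2 * triArea A₁₂ A₂₃ A₃₁
      = -(x₁ * Real.sin (t₂ - t₃) + x₂ * Real.sin (t₃ - t₁) + x₃ * Real.sin (t₁ - t₂)) ^ 2 /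
          (Real.sin (t₂ - t₃) * Real.sin (t₃ - t₁) * Real.sin (t₁ - t₂)) := by

  have key : ∀ u v : ℝ, Real.sin (u - v) = 0 → ∃ n : ℤ, u - v = n * π := by
    intro u v h
    obtain ⟨n, hn⟩ := Real.sin_eq_zero_iff.mp h
    exact ⟨n, hn.symm⟩
  have s12 : Real.sin (t₁ - t₂) ≠ 0 := fun h => h12 (key _ _ h)
  have s23 : Real.sin (t₂ - t₃) ≠ 0 := fun h => h23 (key _ _ h)
  have s31 : Real.sin (t₃ - t₁) ≠ 0 := fun h => h31 (key _ _ h)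
  obtain ⟨e1, e2⟩ := hA₁₂
  obtain ⟨e3, e4⟩ := hA₂₃
  obtain ⟨e5, e6⟩ := hA₃₁
  simp only [Real.sin_sub] at s12 s23 s31 ⊢
  have f1 : A₁₂.1 * (Real.sin t₁ * Real.cos t₂ - Real.cos t₁ * Real.sin t₂)
      = x₂ * Real.sin t₁ - x₁ * Real.sin t₂ := by linear_combination Real.sin t₁ * e2 - Real.sin t₂ * e1
  have f2 : A₁₂.2 * (Real.sin t₁ * Real.cos t₂ - Real.cos t₁ * Real.sin t₂)
      = x₁ * Real.cos t₂ - x₂ * Real.cos t₁ := by linear_combination Real.cos t₂ * e1 - Real.cos t₁ * e2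
  have f3 : A₂₃.1 * (Real.sin t₂ * Real.cos t₃ - Real.cos t₂ * Real.sin t₃)
      = x₃ * Real.sin t₂ - x₂ * Real.sin t₃ := by linear_combination Real.sin t₂ * e4 - Real.sin t₃ * e3
  have f4 : A₂₃.2 * (Real.sin t₂ * Real.cos t₃ - Real.cos t₂ * Real.sin t₃)
      = x₂ * Real.cos t₃ - x₃ * Real.cos t₂ := by linear_combination Real.cos t₃ * e3 - Real.cos t₂ * e4
  have f5 : A₃₁.1 * (Real.sin t₃ * Real.cos t₁ - Real.cos t₃ * Real.sin t₁)
      = x₁ * Real.sin t₃ - x₃ * Real.sin t₁ := by linear_combination Real.sin t₃ * e6 - Real.sin t₁ * e5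
  have f6 : A₃₁.2 * (Real.sin t₃ * Real.cos t₁ - Real.cos t₃ * Real.sin t₁)
      = x₃ * Real.cos t₁ - x₁ * Real.cos t₃ := by linear_combination Real.cos t₁ * e5 - Real.cos t₃ * e6
  have g1 : A₁₂.1 = (x₂ * Real.sin t₁ - x₁ * Real.sin t₂) / (Real.sin t₁ * Real.cos t₂ - Real.cos t₁ * Real.sin t₂) := by
    rw [eq_div_iff s12]; linarith [f1]
  have g2 : A₁₂.2 = (x₁ * Real.cos t₂ - x₂ * Real.cos t₁) / (Real.sin t₁ * Real.cos t₂ - Real.cos t₁ * Real.sin t₂) := by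
    rw [eq_div_iff s12]; linarith [f2]
  have g3 : A₂₃.1 = (x₃ * Real.sin t₂ - x₂ * Real.sin t₃) / (Real.sin t₂ * Real.cos t₃ - Real.cos t₂ * Real.sin t₃) := by
    rw [eq_div_iff s23]; linarith [f3]
  have g4 : A₂₃.2 = (x₂ * Real.cos t₃ - x₃ * Real.cos t₂) / (Real.sin t₂ * Real.cos t₃ - Real.cos t₂ * Real.sin t₃) := by
    rw [eq_div_iff s23]; linarith [f4]
  have g5 : A₃₁.1 = (x₁ * Real.sin t₃ - x₃ * Real.sin t₁) / (Real.sin t₃ * Real.cos t₁ - Real.cos t₃ * Real.sin t₁) := by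
    rw [eq_div_iff s31]; linarith [f5]
  have g6 : A₃₁.2 = (x₃ * Real.cos t₁ - x₁ * Real.cos t₃) / (Real.sin t₃ * Real.cos t₁ - Real.cos t₃ * Real.sin t₁) := by
    rw [eq_div_iff s31]; linarith [f6]
  simp only [triArea, symp2, g1, g2, g3, g4, g5, g6]
  generalize hd12 : Real.sin t₁ * Real.cos t₂ - Real.cos t₁ * Real.sin t₂ = d12 at s12 ⊢
  generalize hd23 : Real.sin t₂ * Real.cos t₃ - Real.cos t₂ * Real.sin t₃ = d23 at s23 ⊢
  generalize hd31 : Real.sin t₃ * Real.cos t₁ - Real.cos t₃ * Real.sin t₁ = d31 at s31 ⊢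
  field_simp
  subst hd12 hd23 hd31
  ring
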